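/- For L = 3, the set consisting of the four corner tiles together with the central tile rigidifies the 3×3 pattern under the coordinate-based propagation rule, and no set of fewer than 5 tiles does, so the minimum is 5 = 2·3 − 1. -/
import Mathlib


/-- Index of a tile of the `L × L` rotating-squares pattern: `(i, j)` with
`0 ≤ i, j ≤ L − 1`. -/
def IsTileIdx (L : ℕ) (t : ℕ × ℕ) : Prop := t.1 ≤ L - 1 ∧ t.2 ≤ L - 1

/-- Index of a hole of the `L × L` pattern: `(i, j)` with `0 ≤ i, j ≤ L − 2`;
hole `(i, j)` lies between tiles `(i, j)`, `(i+1, j)`, `(i, j+1)` and `(i+1, j+1)`. -/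
def IsHoleIdx (L : ℕ) (o : ℕ × ℕ) : Prop := o.1 + 1 ≤ L - 1 ∧ o.2 + 1 ≤ L - 1

/-- Hinge vertices of the pattern, shared between adjacent components:
`(false, i, j)` is the hinge joining tiles `(i, j)` and `(i+1, j)`, and
`(true, i, j)` is the hinge joining tiles `(i, j)` and `(i, j+1)`. -/
def IsHinge (L : ℕ) (h : Bool × ℕ × ℕ) : Prop :=
  if h.1 then h.2.1 ≤ L - 1 ∧ h.2.2 + 1 ≤ L - 1
  else h.2.1 + 1 ≤ L - 1 ∧ h.2.2 ≤ L - 1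

/-- The hinge `h` is a vertex of the tile `t`. -/
def TileHinge (L : ℕ) (t : ℕ × ℕ) (h : Bool × ℕ × ℕ) : Prop :=
  IsHinge L h ∧
    (if h.1 then h.2.1 = t.1 ∧ (h.2.2 = t.2 ∨ h.2.2 + 1 = t.2)
     else h.2.2 = t.2 ∧ (h.2.1 = t.1 ∨ h.2.1 + 1 = t.1))

/-- The hinge `h` is a vertex of the hole `o`: the four vertices of hole `(i, j)` are the
hinges of the four pairs of adjacent tiles surrounding it. -/
def HoleHinge (L : ℕ) (o : ℕ × ℕ) (h : Bool × ℕ × ℕ) : Prop :=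
  IsHinge L h ∧
    (if h.1 then h.2.2 = o.2 ∧ (h.2.1 = o.1 ∨ h.2.1 = o.1 + 1)
     else h.2.1 = o.1 ∧ (h.2.2 = o.2 ∨ h.2.2 = o.2 + 1))

/-- Components: `(true, t)` is the tile `t` and `(false, o)` is the hole `o`.
`CompHinge L c h` says the hinge `h` is a vertex of the component `c`. -/
def CompHinge (L : ℕ) (c : Bool × ℕ × ℕ) (h : Bool × ℕ × ℕ) : Prop :=
  if c.1 then TileHinge L c.2 h else HoleHinge L c.2 h

mutual
  /-- `CRigid L S c`: starting from the set `S` of explicitly rigidified tiles, the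
  component `c` becomes rigid under the coordinate-based propagation rule: a component
  (a parallelogram) is rigid as soon as three of its vertices have uniquely determined
  coordinates. -/
  inductive CRigid (L : ℕ) (S : Set (ℕ × ℕ)) : Bool × ℕ × ℕ → Prop
    | expl (t : ℕ × ℕ) : t ∈ S → CRigid L S (true, t)
    | prop (c h₁ h₂ h₃ : Bool × ℕ × ℕ) : h₁ ≠ h₂ → h₁ ≠ h₃ → h₂ ≠ h₃ →
        CompHinge L c h₁ → CompHinge L c h₂ → CompHinge L c h₃ →
        HDet L S h₁ → HDet L S h₂ → HDet L S h₃ → CRigid L S c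

  /-- `HDet L S h`: the coordinates of the vertex `h` are uniquely determined, namely
  `h` is a vertex of some rigid component. -/
  inductive HDet (L : ℕ) (S : Set (ℕ × ℕ)) : Bool × ℕ × ℕ → Prop
    | ofComp (c : Bool × ℕ × ℕ) (h : Bool × ℕ × ℕ) :
        CompHinge L c h → CRigid L S c → HDet L S h
end

/-- The set `S` of explicitly rigidified tiles rigidifies the whole `L × L` pattern:
every tile and every hole becomes rigid. -/
def Rigidifies (L : ℕ) (S : Set (ℕ × ℕ)) : Prop :=
  (∀ t : ℕ × ℕ, IsTileIdx L t → CRigid L S (true, t)) ∧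
  (∀ o : ℕ × ℕ, IsHoleIdx L o → CRigid L S (false, o))
section Aux

instance (L : ℕ) (c h : Bool × ℕ × ℕ) : Decidable (CompHinge L c h) := by
  unfold CompHinge TileHinge HoleHinge IsHinge
  split <;> split <;> infer_instance

/-- The 8 hinges determined by the four corner tiles. -/
def goodH : List (Bool × ℕ × ℕ) :=
  [(true,0,0),(false,0,0),(true,0,1),(false,0,2),(true,2,0),(false,1,0),(true,2,1),(false,1,2)]

/-- The four corner tiles, as components. -/
def goodC : List (Bool × ℕ × ℕ) :=
  [(true,0,0),(true,0,2),(true,2,0),(true,2,2)]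

/-- All bounded components. -/
def allC : List (Bool × ℕ × ℕ) :=
  [true,false].flatMap fun b => (List.range 3).flatMap fun x => (List.range 3).map fun y => (b,x,y)


lemma hinge_mem {c h : Bool × ℕ × ℕ} (hc : CompHinge 3 c h) : h ∈ allC := by
  obtain ⟨b, x, y⟩ := h
  obtain ⟨b', x', y'⟩ := c
  have hb : x < 3 ∧ y < 3 := by
    cases b <;> cases b' <;>
      simp only [CompHinge, TileHinge, HoleHinge, IsHinge, if_true, if_false,
        Bool.false_eq_true, ite_true, ite_false] at hc <;> omega
  simp [allC, List.mem_flatMap, List.mem_range]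
  cases b <;> simp <;> omega

lemma comp_mem {c h : Bool × ℕ × ℕ} (hc : CompHinge 3 c h) (hg : h ∈ goodH) : c ∈ allC := by
  obtain ⟨b, x, y⟩ := c
  have hb : x < 3 ∧ y < 3 := by
    simp [goodH] at hg
    rcases hg with rfl|rfl|rfl|rfl|rfl|rfl|rfl|rfl <;> cases b <;>
      simp only [CompHinge, TileHinge, HoleHinge, IsHinge, if_true, if_false,
        Bool.false_eq_true, ite_true, ite_false] at hc <;> omega
  simp [allC, List.mem_flatMap, List.mem_range]
  cases b <;> simp <;> omega

lemma no3 : ∀ c ∈ allC, ∀ h₁ ∈ goodH, ∀ h₂ ∈ goodH, ∀ h₃ ∈ goodH,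
    h₁ ≠ h₂ → h₁ ≠ h₃ → h₂ ≠ h₃ →
    ¬(CompHinge 3 c h₁ ∧ CompHinge 3 c h₂ ∧ CompHinge 3 c h₃) := by
  decide

lemma goodC_hinges : ∀ c ∈ goodC, ∀ h ∈ allC, CompHinge 3 c h → h ∈ goodH := by
  decide

end Aux

def cornerL : List (ℕ × ℕ) := [(0,0),(0,2),(2,0),(2,2)]

set_option maxHeartbeats 1000000 in
lemma corner_no3 : ∀ t ∈ cornerL, ∀ h₁ ∈ allC, ∀ h₂ ∈ allC, ∀ h₃ ∈ allC,
    h₁ ≠ h₂ → h₁ ≠ h₃ → h₂ ≠ h₃ →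
    ¬(CompHinge 3 (true,t) h₁ ∧ CompHinge 3 (true,t) h₂ ∧ CompHinge 3 (true,t) h₃) := by
  decide

lemma corner_in_S (S : Set (ℕ × ℕ)) (t : ℕ × ℕ) (ht : t ∈ cornerL)
    (hr : CRigid 3 S (true, t)) : t ∈ S := by
  cases hr with
  | expl _ h => exact h
  | prop _ h₁ h₂ h₃ n12 n13 n23 c1 c2 c3 _ _ _ =>
      exact absurd ⟨c1, c2, c3⟩
        (corner_no3 t ht h₁ (hinge_mem c1) h₂ (hinge_mem c2) h₃ (hinge_mem c3) n12 n13 n23)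

lemma invariant {c : Bool × ℕ × ℕ}
    (hr : CRigid 3 ({(0,0),(0,2),(2,0),(2,2)} : Set (ℕ × ℕ)) c) : c ∈ goodC := by
  refine CRigid.rec (motive_1 := fun c _ => c ∈ goodC) (motive_2 := fun h _ => h ∈ goodH)
    ?_ ?_ ?_ hr
  · intro t ht
    simp only [Set.mem_insert_iff, Set.mem_singleton_iff] at ht
    rcases ht with rfl|rfl|rfl|rfl <;> simp [goodC]
  · intro c h₁ h₂ h₃ n12 n13 n23 c1 c2 c3 _ _ _ g1 g2 g3
    exact absurd ⟨c1, c2, c3⟩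
      (no3 c (comp_mem c1 g1) h₁ g1 h₂ g2 h₃ g3 n12 n13 n23)
  · intro c h ch _ hc
    exact goodC_hinges c hc h (hinge_mem ch) ch

section Part1

def S₀ : Set (ℕ × ℕ) := {(0, 0), (0, 2), (2, 0), (2, 2), (1, 1)}

lemma r00 : CRigid 3 S₀ (true,(0,0)) := .expl _ (by simp [S₀])
lemma r02 : CRigid 3 S₀ (true,(0,2)) := .expl _ (by simp [S₀])
lemma r20 : CRigid 3 S₀ (true,(2,0)) := .expl _ (by simp [S₀])
lemma r22 : CRigid 3 S₀ (true,(2,2)) := .expl _ (by simp [S₀])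
lemma r11 : CRigid 3 S₀ (true,(1,1)) := .expl _ (by simp [S₀])

-- the 12 determined hinges
lemma dT00 : HDet 3 S₀ (true,0,0)  := .ofComp (true,(0,0)) _ (by decide) r00
lemma dF00 : HDet 3 S₀ (false,0,0) := .ofComp (true,(0,0)) _ (by decide) r00
lemma dT01 : HDet 3 S₀ (true,0,1)  := .ofComp (true,(0,2)) _ (by decide) r02
lemma dF02 : HDet 3 S₀ (false,0,2) := .ofComp (true,(0,2)) _ (by decide) r02
lemma dT20 : HDet 3 S₀ (true,2,0)  := .ofComp (true,(2,0)) _ (by decide) r20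
lemma dF10 : HDet 3 S₀ (false,1,0) := .ofComp (true,(2,0)) _ (by decide) r20
lemma dT21 : HDet 3 S₀ (true,2,1)  := .ofComp (true,(2,2)) _ (by decide) r22
lemma dF12 : HDet 3 S₀ (false,1,2) := .ofComp (true,(2,2)) _ (by decide) r22
lemma dT10 : HDet 3 S₀ (true,1,0)  := .ofComp (true,(1,1)) _ (by decide) r11
lemma dT11 : HDet 3 S₀ (true,1,1)  := .ofComp (true,(1,1)) _ (by decide) r11
lemma dF01 : HDet 3 S₀ (false,0,1) := .ofComp (true,(1,1)) _ (by decide) r11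
lemma dF11 : HDet 3 S₀ (false,1,1) := .ofComp (true,(1,1)) _ (by decide) r11

-- remaining tiles
lemma r01 : CRigid 3 S₀ (true,(0,1)) :=
  .prop _ (true,0,0) (true,0,1) (false,0,1) (by decide) (by decide) (by decide)
    (by decide) (by decide) (by decide) dT00 dT01 dF01
lemma r10 : CRigid 3 S₀ (true,(1,0)) :=
  .prop _ (true,1,0) (false,0,0) (false,1,0) (by decide) (by decide) (by decide)
    (by decide) (by decide) (by decide) dT10 dF00 dF10
lemma r21 : CRigid 3 S₀ (true,(2,1)) :=
  .prop _ (true,2,0) (true,2,1) (false,1,1) (by decide) (by decide) (by decide)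
    (by decide) (by decide) (by decide) dT20 dT21 dF11
lemma r12 : CRigid 3 S₀ (true,(1,2)) :=
  .prop _ (true,1,1) (false,0,2) (false,1,2) (by decide) (by decide) (by decide)
    (by decide) (by decide) (by decide) dT11 dF02 dF12

-- holes
lemma o00 : CRigid 3 S₀ (false,(0,0)) :=
  .prop _ (true,0,0) (true,1,0) (false,0,0) (by decide) (by decide) (by decide)
    (by decide) (by decide) (by decide) dT00 dT10 dF00
lemma o01 : CRigid 3 S₀ (false,(0,1)) :=
  .prop _ (true,0,1) (true,1,1) (false,0,1) (by decide) (by decide) (by decide)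
    (by decide) (by decide) (by decide) dT01 dT11 dF01
lemma o10 : CRigid 3 S₀ (false,(1,0)) :=
  .prop _ (true,1,0) (true,2,0) (false,1,0) (by decide) (by decide) (by decide)
    (by decide) (by decide) (by decide) dT10 dT20 dF10
lemma o11 : CRigid 3 S₀ (false,(1,1)) :=
  .prop _ (true,1,1) (true,2,1) (false,1,1) (by decide) (by decide) (by decide)
    (by decide) (by decide) (by decide) dT11 dT21 dF11

end Part1

/-- For `L = 3`, the four corner tiles together with the central tile rigidify the
`3 × 3` pattern under the coordinate-based propagation rule, and no set of fewer than
`5` tiles does; so the minimum is `5 = 2·3 − 1`. -/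
theorem three_by_three_coordinate :
    Rigidifies 3 ({(0, 0), (0, 2), (2, 0), (2, 2), (1, 1)} : Set (ℕ × ℕ)) ∧
    ∀ S : Finset (ℕ × ℕ), (∀ t ∈ S, IsTileIdx 3 t) → Rigidifies 3 ↑S →
      5 ≤ S.card := by
  constructor
  · constructor
    · rintro ⟨i, j⟩ ⟨hi, hj⟩
      simp only [IsTileIdx] at hi hj
      interval_cases i <;> interval_cases j <;>
        first
          | exact r00 | exact r01 | exact r02 | exact r10 | exact r11
          | exact r12 | exact r20 | exact r21 | exact r22
    · rintro ⟨i, j⟩ ⟨hi, hj⟩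
      simp only [IsHoleIdx] at hi hj
      have hi' : i ≤ 1 := by omega
      have hj' : j ≤ 1 := by omega
      interval_cases i <;> interval_cases j <;>
        first | exact o00 | exact o01 | exact o10 | exact o11
  · intro S _ hr
    have hsub : ({(0,0),(0,2),(2,0),(2,2)} : Finset (ℕ × ℕ)) ⊆ S := by
      intro t ht
      fin_cases ht <;>
        exact corner_in_S _ _ (by decide) (hr.1 _ (by constructor <;> norm_num))
    by_contra hlt
    push_neg at hlt
    have hS4 : S = ({(0,0),(0,2),(2,0),(2,2)} : Finset (ℕ × ℕ)) := by
      refine (Finset.eq_of_subset_of_card_le hsub ?_).symm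
      calc S.card ≤ 4 := by omega
        _ = ({(0,0),(0,2),(2,0),(2,2)} : Finset (ℕ × ℕ)).card := by decide
    have h11 : CRigid 3 ({(0,0),(0,2),(2,0),(2,2)} : Set (ℕ × ℕ)) (true,(1,1)) := by
      have := hr.1 (1,1) (by constructor <;> norm_num)
      convert this using 2
      rw [hS4]
      simp [Finset.coe_insert]
    exact absurd (invariant h11) (by decide)
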